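/- arXiv:2012.00268 — 4 statements merged into one kernel-verified Lean document; each statement's English description precedes it below -/
import Mathlib

section
/- Let m_B, m_E be positive integers, K_B, K_E > 0, ρ_B, ρ_E > 0 real, and R_s ≥ 1 real. Let F_B = F_{m_B,K_B,ρ_B} be the integer-parameter Rician shadowed CDF of the main channel and f_E = f_{m_E,K_E,ρ_E} the integer-parameter Rician shadowed PDF of the eavesdropper channel. Then ∫₀^∞ F_B(R_s·γ + R_s − 1)·f_E(γ) dγ = Σ_{l=0}^{m_B−1} Σ_{n=0}^{m_E−1} B_l(m_B,K_B)·B_n(m_E,K_E)·( 1 − exp(−(R_s−1)/ρ_B) · Σ_{k=0}^{m_B−l−1} Σ_{t=0}^{k} [ (R_s−1)^t · R_s^{k−t} · (m_E−n+k−t−1)! ] / [ ρ_B^k · ρ_E^{m_E−n} · t! · (k−t)! · (m_E−n−1)! ] · (1/ρ_E + R_s/ρ_B)^{−(m_E−n+k−t)} ). -/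
open MeasureTheory Filter Finset Real

/-- Coefficients `B_n(m,K)` of the integer-parameter Rician shadowed model. -/
noncomputable def Bcoef (m : ℕ) (K : ℝ) (n : ℕ) : ℝ :=
  ((m - 1).choose n : ℝ) * ((m : ℝ) / (K + m)) ^ n * (K / (K + m)) ^ (m - 1 - n)

/-- Integer-parameter Rician shadowed PDF with parameters `(m, K, ρ)`. -/
noncomputable def rsPDF (m : ℕ) (K ρ : ℝ) (γ : ℝ) : ℝ :=
  ∑ n ∈ Finset.range m,
    Bcoef m K n * γ ^ (m - n - 1) * Real.exp (-γ / ρ) /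
      (ρ ^ (m - n) * ((m - n - 1).factorial : ℝ))

/-- Integer-parameter Rician shadowed CDF with parameters `(m, K, ρ)`. -/
noncomputable def rsCDF (m : ℕ) (K ρ : ℝ) (γ : ℝ) : ℝ :=
  ∑ j ∈ Finset.range m,
    Bcoef m K j *
      (1 - Real.exp (-γ / ρ) *
        ∑ k ∈ Finset.range (m - j), γ ^ k / (ρ ^ k * (k.factorial : ℝ)))

/-- Alternate Rician Shadowed (ARS) PDF with parameters `(p, m, K₁, K₂, ρ₁, ρ₂)`. -/
noncomputable def arsPDF (p : ℝ) (m : ℕ) (K₁ K₂ ρ₁ ρ₂ : ℝ) (γ : ℝ) : ℝ :=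
  p * rsPDF m K₁ ρ₁ γ + (1 - p) * rsPDF m K₂ ρ₂ γ

/-- Alternate Rician Shadowed (ARS) CDF with parameters `(p, m, K₁, K₂, ρ₁, ρ₂)`. -/
noncomputable def arsCDF (p : ℝ) (m : ℕ) (K₁ K₂ ρ₁ ρ₂ : ℝ) (γ : ℝ) : ℝ :=
  p * rsCDF m K₁ ρ₁ γ + (1 - p) * rsCDF m K₂ ρ₂ γ


lemma integrableOn_pow_mul_exp (j : ℕ) {c : ℝ} (hc : 0 < c) :
    IntegrableOn (fun γ : ℝ => γ ^ j * Real.exp (-c * γ)) (Set.Ioi 0) := by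
  have h := integrableOn_rpow_mul_exp_neg_mul_rpow (s := (j : ℝ)) (p := 1)
    (by exact_mod_cast neg_one_lt_zero.trans_le (Nat.cast_nonneg j)) one_pos hc
  refine h.congr_fun (fun x hx => ?_) measurableSet_Ioi
  dsimp only
  rw [Real.rpow_natCast, Real.rpow_one]

lemma integral_pow_mul_exp (j : ℕ) {c : ℝ} (hc : 0 < c) :
    ∫ γ in Set.Ioi (0 : ℝ), γ ^ j * Real.exp (-c * γ) = (j.factorial : ℝ) / c ^ (j + 1) := by
  have h := Real.integral_rpow_mul_exp_neg_mul_Ioi (a := (j : ℝ) + 1) (by positivity) hc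
  rw [add_sub_cancel_right, Real.Gamma_nat_eq_factorial,
    show ((j : ℝ) + 1) = ((j + 1 : ℕ) : ℝ) by push_cast; ring, Real.rpow_natCast] at h
  rw [show (∫ γ in Set.Ioi (0:ℝ), γ ^ j * Real.exp (-c * γ))
      = ∫ t in Set.Ioi (0:ℝ), t ^ (j:ℝ) * Real.exp (-(c * t)) by
    refine setIntegral_congr_fun measurableSet_Ioi (fun t ht => ?_)
    rw [Real.rpow_natCast, neg_mul]]
  rw [h, one_div, inv_pow, div_eq_inv_mul, mul_comm]

/-- One branch pair of the closed-form secrecy outage probability (integer `m`). -/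
theorem sop_branch_pair (mB mE : ℕ) (hmB : 0 < mB) (hmE : 0 < mE)
    (KB KE ρB ρE : ℝ) (hKB : 0 < KB) (hKE : 0 < KE) (hρB : 0 < ρB) (hρE : 0 < ρE)
    (Rs : ℝ) (hRs : 1 ≤ Rs) :
    ∫ γ in Set.Ioi (0 : ℝ), rsCDF mB KB ρB (Rs * γ + Rs - 1) * rsPDF mE KE ρE γ =
      ∑ l ∈ Finset.range mB, ∑ n ∈ Finset.range mE,
        Bcoef mB KB l * Bcoef mE KE n *
          (1 - Real.exp (-(Rs - 1) / ρB) *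
            ∑ k ∈ Finset.range (mB - l), ∑ t ∈ Finset.range (k + 1),
              (Rs - 1) ^ t * Rs ^ (k - t) * ((mE - n + k - t - 1).factorial : ℝ) /
                  (ρB ^ k * ρE ^ (mE - n) * (t.factorial : ℝ) *
                    ((k - t).factorial : ℝ) * ((mE - n - 1).factorial : ℝ)) *
                (1 / ρE + Rs / ρB) ^ (-((mE - n + k - t : ℕ) : ℤ))) := by
  have hRs0 : (0:ℝ) < Rs := lt_of_lt_of_le one_pos hRs
  have hE : (0:ℝ) < 1/ρE := by positivity
  have hc : (0:ℝ) < 1/ρE + Rs/ρB := by positivity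
  set c : ℝ := 1/ρE + Rs/ρB with hcdef
  have hpt : ∀ γ : ℝ,
      rsCDF mB KB ρB (Rs * γ + Rs - 1) * rsPDF mE KE ρE γ =
      ∑ l ∈ Finset.range mB, ∑ n ∈ Finset.range mE,
        (Bcoef mB KB l * Bcoef mE KE n / (ρE ^ (mE - n) * ((mE - n - 1).factorial : ℝ)) *
            (γ ^ (mE - n - 1) * Real.exp (-(1/ρE) * γ)) -
          ∑ k ∈ Finset.range (mB - l), ∑ t ∈ Finset.range (k + 1),
            (Bcoef mB KB l * Bcoef mE KE n * Real.exp (-(Rs - 1)/ρB) * (Rs-1)^t * Rs^(k-t) /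
              (ρB ^ k * ρE ^ (mE - n) * (t.factorial : ℝ) * ((k - t).factorial : ℝ) *
                ((mE - n - 1).factorial : ℝ))) *
            (γ ^ (mE - n - 1 + (k - t)) * Real.exp (-c * γ))) := by
    intro γ
    rw [rsCDF, rsPDF, Finset.sum_mul_sum]
    refine Finset.sum_congr rfl fun l _ => Finset.sum_congr rfl fun n _ => ?_
    have hx1 : Real.exp (-(Rs * γ + Rs - 1) / ρB)
        = Real.exp (-(Rs - 1)/ρB) * Real.exp (-(Rs/ρB) * γ) := by
      rw [← Real.exp_add]; congr 1; field_simp; ring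
    have hx3 : Real.exp (-γ / ρE) = Real.exp (-(1/ρE) * γ) := by congr 1; ring
    have hx2 : Real.exp (-c * γ) = Real.exp (-(1/ρE) * γ) * Real.exp (-(Rs/ρB) * γ) := by
      rw [← Real.exp_add]; congr 1; rw [hcdef]; ring
    simp only [hx1, hx3, hx2]
    have hsum : Bcoef mB KB l *
          (Real.exp (-(Rs - 1)/ρB) * Real.exp (-(Rs/ρB) * γ) *
            ∑ k ∈ Finset.range (mB - l),
              (Rs * γ + Rs - 1) ^ k / (ρB ^ k * (k.factorial : ℝ))) *
          (Bcoef mE KE n * γ ^ (mE - n - 1) * Real.exp (-(1/ρE) * γ) /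
            (ρE ^ (mE - n) * ((mE - n - 1).factorial : ℝ))) =
        ∑ k ∈ Finset.range (mB - l), ∑ t ∈ Finset.range (k + 1),
            (Bcoef mB KB l * Bcoef mE KE n * Real.exp (-(Rs - 1)/ρB) * (Rs-1)^t * Rs^(k-t) /
              (ρB ^ k * ρE ^ (mE - n) * (t.factorial : ℝ) * ((k - t).factorial : ℝ) *
                ((mE - n - 1).factorial : ℝ))) *
            (γ ^ (mE - n - 1 + (k - t)) *
              (Real.exp (-(1/ρE) * γ) * Real.exp (-(Rs/ρB) * γ))) := by
      simp only [Finset.mul_sum, Finset.sum_mul]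
      refine Finset.sum_congr rfl fun k hk => ?_
      have hxk : (Rs * γ + Rs - 1) ^ k =
          ∑ t ∈ Finset.range (k + 1), (Rs-1)^t * (Rs*γ)^(k-t) * (k.choose t : ℝ) := by
        rw [show Rs * γ + Rs - 1 = (Rs - 1) + Rs * γ by ring, add_pow]
      rw [hxk]
      simp only [Finset.sum_div, Finset.mul_sum, Finset.sum_mul]
      refine Finset.sum_congr rfl fun t ht => ?_
      have htk : t ≤ k := Nat.lt_succ_iff.mp (Finset.mem_range.mp ht)
      have hfac : (k.factorial : ℝ) = (k.choose t : ℝ) * t.factorial * (k - t).factorial := by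
        exact_mod_cast (Nat.choose_mul_factorial_mul_factorial htk).symm
      have ht0 : ((t.factorial : ℝ)) ≠ 0 := Nat.cast_ne_zero.mpr t.factorial_ne_zero
      have hkt0 : (((k-t).factorial : ℝ)) ≠ 0 := Nat.cast_ne_zero.mpr (k-t).factorial_ne_zero
      have ha0 : (((mE - n - 1).factorial : ℝ)) ≠ 0 :=
        Nat.cast_ne_zero.mpr (mE - n - 1).factorial_ne_zero
      have hch0 : ((k.choose t : ℝ)) ≠ 0 := Nat.cast_ne_zero.mpr (Nat.choose_pos htk).ne'
      have hρB0 : ρB ≠ 0 := ne_of_gt hρB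
      have hρE0 : ρE ≠ 0 := ne_of_gt hρE
      rw [hfac, pow_add, mul_pow]
      field_simp
    rw [← hsum]
    ring
  simp only [hpt]
  have hgC : ∀ l n : ℕ, Integrable
      (fun γ : ℝ => ∑ k ∈ Finset.range (mB - l), ∑ t ∈ Finset.range (k + 1),
        (Bcoef mB KB l * Bcoef mE KE n * Real.exp (-(Rs - 1)/ρB) * (Rs-1)^t * Rs^(k-t) /
          (ρB ^ k * ρE ^ (mE - n) * (t.factorial : ℝ) * ((k - t).factorial : ℝ) *
            ((mE - n - 1).factorial : ℝ))) *
        (γ ^ (mE - n - 1 + (k - t)) * Real.exp (-c * γ)))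
      (volume.restrict (Set.Ioi 0)) := by
    intro l n
    refine integrable_finset_sum _ fun k _ => integrable_finset_sum _ fun t _ => ?_
    exact (integrableOn_pow_mul_exp _ hc).const_mul _
  have hgA : ∀ n : ℕ, Integrable
      (fun γ : ℝ => Bcoef mB KB 0 * Bcoef mE KE n / (ρE ^ (mE - n) * ((mE - n - 1).factorial : ℝ)) *
        (γ ^ (mE - n - 1) * Real.exp (-(1/ρE) * γ))) (volume.restrict (Set.Ioi 0)) :=
    fun n => (integrableOn_pow_mul_exp _ hE).const_mul _
  have hg : ∀ l n : ℕ, Integrable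
      (fun γ : ℝ =>
        Bcoef mB KB l * Bcoef mE KE n / (ρE ^ (mE - n) * ((mE - n - 1).factorial : ℝ)) *
            (γ ^ (mE - n - 1) * Real.exp (-(1/ρE) * γ)) -
          ∑ k ∈ Finset.range (mB - l), ∑ t ∈ Finset.range (k + 1),
            (Bcoef mB KB l * Bcoef mE KE n * Real.exp (-(Rs - 1)/ρB) * (Rs-1)^t * Rs^(k-t) /
              (ρB ^ k * ρE ^ (mE - n) * (t.factorial : ℝ) * ((k - t).factorial : ℝ) *
                ((mE - n - 1).factorial : ℝ))) *
            (γ ^ (mE - n - 1 + (k - t)) * Real.exp (-c * γ)))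
      (volume.restrict (Set.Ioi 0)) := by
    intro l n
    exact ((integrableOn_pow_mul_exp _ hE).const_mul _).sub (hgC l n)
  rw [integral_finset_sum _ (fun l _ => integrable_finset_sum _ (fun n _ => hg l n))]
  refine Finset.sum_congr rfl fun l hl => ?_
  rw [integral_finset_sum _ (fun n _ => hg l n)]
  refine Finset.sum_congr rfl fun n hn => ?_
  have hnE : n < mE := Finset.mem_range.mp hn
  rw [integral_sub ((integrableOn_pow_mul_exp _ hE).const_mul _) (hgC l n)]
  have hI1 : ∫ γ in Set.Ioi (0:ℝ),
      Bcoef mB KB l * Bcoef mE KE n / (ρE ^ (mE - n) * ((mE - n - 1).factorial : ℝ)) *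
        (γ ^ (mE - n - 1) * Real.exp (-(1/ρE) * γ)) = Bcoef mB KB l * Bcoef mE KE n := by
    rw [integral_const_mul, integral_pow_mul_exp _ hE,
      show mE - n - 1 + 1 = mE - n from by omega]
    have ha0 : (((mE - n - 1).factorial : ℝ)) ≠ 0 :=
      Nat.cast_ne_zero.mpr (mE - n - 1).factorial_ne_zero
    have hρE0 : ρE ≠ 0 := ne_of_gt hρE
    rw [one_div, inv_pow]
    field_simp
  have hI2 : ∫ γ in Set.Ioi (0:ℝ),
      (∑ k ∈ Finset.range (mB - l), ∑ t ∈ Finset.range (k + 1),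
        (Bcoef mB KB l * Bcoef mE KE n * Real.exp (-(Rs - 1)/ρB) * (Rs-1)^t * Rs^(k-t) /
          (ρB ^ k * ρE ^ (mE - n) * (t.factorial : ℝ) * ((k - t).factorial : ℝ) *
            ((mE - n - 1).factorial : ℝ))) *
        (γ ^ (mE - n - 1 + (k - t)) * Real.exp (-c * γ))) =
      Bcoef mB KB l * Bcoef mE KE n *
        (Real.exp (-(Rs - 1) / ρB) *
          ∑ k ∈ Finset.range (mB - l), ∑ t ∈ Finset.range (k + 1),
            (Rs - 1) ^ t * Rs ^ (k - t) * ((mE - n + k - t - 1).factorial : ℝ) /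
                (ρB ^ k * ρE ^ (mE - n) * (t.factorial : ℝ) *
                  ((k - t).factorial : ℝ) * ((mE - n - 1).factorial : ℝ)) *
              c ^ (-((mE - n + k - t : ℕ) : ℤ))) := by
    rw [integral_finset_sum _ (fun k _ => integrable_finset_sum _
      (fun t _ => (integrableOn_pow_mul_exp _ hc).const_mul _))]
    simp only [Finset.mul_sum]
    refine Finset.sum_congr rfl fun k hk => ?_
    rw [integral_finset_sum _ (fun t _ => (integrableOn_pow_mul_exp _ hc).const_mul _)]
    refine Finset.sum_congr rfl fun t ht => ?_
    have htk : t ≤ k := Nat.lt_succ_iff.mp (Finset.mem_range.mp ht)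
    rw [integral_const_mul, integral_pow_mul_exp _ hc]
    rw [show mE - n + k - t - 1 = mE - n - 1 + (k - t) from by omega,
      show (mE - n + k - t : ℕ) = mE - n - 1 + (k - t) + 1 from by omega]
    rw [zpow_neg, zpow_natCast]
    have ht0 : ((t.factorial : ℝ)) ≠ 0 := Nat.cast_ne_zero.mpr t.factorial_ne_zero
    have hkt0 : (((k-t).factorial : ℝ)) ≠ 0 := Nat.cast_ne_zero.mpr (k-t).factorial_ne_zero
    have ha0 : (((mE - n - 1).factorial : ℝ)) ≠ 0 :=
      Nat.cast_ne_zero.mpr (mE - n - 1).factorial_ne_zero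
    have hρB0 : ρB ≠ 0 := ne_of_gt hρB
    have hρE0 : ρE ≠ 0 := ne_of_gt hρE
    have hc0 : c ≠ 0 := ne_of_gt hc
    field_simp
  rw [hI1, hI2]
  ring
end

section
/- Let m_B, m_E be positive integers, K_{B,1}, K_{B,2}, K_{E,1}, K_{E,2} > 0, ρ_{B,1}, ρ_{B,2}, ρ_{E,1}, ρ_{E,2} > 0 real, p_B, p_E ∈ [0,1], and R_s ≥ 1 real. Let F_B^{ARS} be the ARS CDF with parameters (p_B, m_B, K_{B,1}, K_{B,2}, ρ_{B,1}, ρ_{B,2}) and f_E^{ARS} the ARS PDF with parameters (p_E, m_E, K_{E,1}, K_{E,2}, ρ_{E,1}, ρ_{E,2}). Then the secrecy outage probability P_o = ∫₀^∞ F_B^{ARS}(R_s·γ + R_s − 1)·f_E^{ARS}(γ) dγ satisfies P_o = Σ_{i=1}^{2} Σ_{j=1}^{2} Q_{B,i}·Q_{E,j}·W_{i,j}, where Q_{ℓ,1} = p_ℓ, Q_{ℓ,2} = 1 − p_ℓ, and W_{i,j} = Σ_{l=0}^{m_B−1} Σ_{n=0}^{m_E−1} B_l(m_B,K_{B,i})·B_n(m_E,K_{E,j})·(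 1 − exp(−(R_s−1)/ρ_{B,i}) · Σ_{k=0}^{m_B−l−1} Σ_{t=0}^{k} [ (R_s−1)^t · R_s^{k−t} · (m_E−n+k−t−1)! ] / [ ρ_{B,i}^k · ρ_{E,j}^{m_E−n} · t! · (k−t)! · (m_E−n−1)! ] · (1/ρ_{E,j} + R_s/ρ_{B,i})^{−(m_E−n+k−t)} ). -/
open MeasureTheory Filter Finset Real

lemma integrableOn_pow_exp (a : ℕ) {b : ℝ} (hb : 0 < b) :
    IntegrableOn (fun γ : ℝ => γ ^ a * Real.exp (-(b * γ))) (Set.Ioi 0) := by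
  have h := integrableOn_rpow_mul_exp_neg_mul_rpow (p := 1) (s := (a : ℝ))
    (lt_of_lt_of_le neg_one_lt_zero (Nat.cast_nonneg a)) one_pos hb
  refine h.congr_fun (fun x hx => ?_) measurableSet_Ioi
  simp only [pow_one, Real.rpow_one, Real.rpow_natCast, neg_mul]

lemma integral_pow_exp (a : ℕ) {b : ℝ} (hb : 0 < b) :
    ∫ γ in Set.Ioi (0:ℝ), γ ^ a * Real.exp (-(b * γ)) = (a.factorial : ℝ) / b ^ (a + 1) := by
  have h := Real.integral_rpow_mul_exp_neg_mul_Ioi (a := (a:ℝ)+1) (r := b) (by positivity) hb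
  rw [show ((a:ℝ)+1-1) = (a:ℝ) by ring, Real.Gamma_nat_eq_factorial] at h
  have e : ∫ γ in Set.Ioi (0:ℝ), γ ^ a * Real.exp (-(b*γ))
      = ∫ t in Set.Ioi (0:ℝ), t ^ ((a:ℝ)) * Real.exp (-(b*t)) := by
    refine setIntegral_congr_fun measurableSet_Ioi (fun x hx => ?_)
    rw [Real.rpow_natCast]
  rw [e, h, show ((a:ℝ)+1) = ((a+1:ℕ):ℝ) by push_cast; ring, Real.rpow_natCast]
  field_simp
  rw [← mul_pow, one_div, inv_mul_cancel₀ hb.ne', one_pow]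


noncomputable def Gterm (mB mE : ℕ) (KB KE ρB ρE Rs : ℝ) (l n : ℕ) (γ : ℝ) : ℝ :=
  Bcoef mB KB l * Bcoef mE KE n *
    (γ ^ (mE - n - 1) * Real.exp (-(1 / ρE * γ)) /
        (ρE ^ (mE - n) * ((mE - n - 1).factorial : ℝ))
      - Real.exp (-(Rs - 1) / ρB) *
          ∑ k ∈ Finset.range (mB - l), ∑ t ∈ Finset.range (k + 1),
            (k.choose t : ℝ) * (Rs - 1) ^ t * Rs ^ (k - t) /
                (ρB ^ k * (k.factorial : ℝ) *
                  (ρE ^ (mE - n) * ((mE - n - 1).factorial : ℝ))) *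
              (γ ^ ((mE - n - 1) + (k - t)) * Real.exp (-((1 / ρE + Rs / ρB) * γ))))

lemma Gterm_integrable (mB mE : ℕ) (KB KE : ℝ) {ρB ρE Rs : ℝ}
    (hρB : 0 < ρB) (hρE : 0 < ρE) (hRs : 1 ≤ Rs) (l n : ℕ) :
    IntegrableOn (fun γ => Gterm mB mE KB KE ρB ρE Rs l n γ) (Set.Ioi 0) := by
  have h1 : (0:ℝ) < 1 / ρE := by positivity
  have hs : (0:ℝ) < 1 / ρE + Rs / ρB := by positivity
  unfold Gterm
  refine Integrable.const_mul ?_ _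
  refine Integrable.sub ((integrableOn_pow_exp _ h1).div_const _) ?_
  refine Integrable.const_mul ?_ _
  refine integrable_finset_sum _ fun k _ => integrable_finset_sum _ fun t _ => ?_
  exact ((integrableOn_pow_exp _ hs).const_mul _)

lemma Gterm_integral (mB mE : ℕ) (KB KE : ℝ) {ρB ρE Rs : ℝ}
    (hρB : 0 < ρB) (hρE : 0 < ρE) (hRs : 1 ≤ Rs) (l n : ℕ) (hn : n < mE) :
    ∫ γ in Set.Ioi (0:ℝ), Gterm mB mE KB KE ρB ρE Rs l n γ =
      Bcoef mB KB l * Bcoef mE KE n *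
        (1 - Real.exp (-(Rs - 1) / ρB) *
          ∑ k ∈ Finset.range (mB - l), ∑ t ∈ Finset.range (k + 1),
            (Rs - 1) ^ t * Rs ^ (k - t) * ((mE - n + k - t - 1).factorial : ℝ) /
                (ρB ^ k * ρE ^ (mE - n) * (t.factorial : ℝ) * ((k - t).factorial : ℝ) *
                  ((mE - n - 1).factorial : ℝ)) *
              (1 / ρE + Rs / ρB) ^ (-((mE - n + k - t : ℕ) : ℤ))) := by
  have h1 : (0:ℝ) < 1 / ρE := by positivity
  have hs : (0:ℝ) < 1 / ρE + Rs / ρB := by positivity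
  unfold Gterm
  rw [integral_const_mul _ _]
  congr 1
  rw [integral_sub ((integrableOn_pow_exp _ h1).div_const _)
    (Integrable.const_mul (integrable_finset_sum _ fun k _ => integrable_finset_sum _
      fun t _ => (integrableOn_pow_exp _ hs).const_mul _) _)]
  congr 1
  · rw [integral_div, integral_pow_exp _ h1]
    have hme : mE - n - 1 + 1 = mE - n := by omega
    rw [hme, one_div, inv_pow]
    have hmf : ((mE - n - 1).factorial : ℝ) ≠ 0 := Nat.cast_ne_zero.mpr (mE - n - 1).factorial_ne_zero
    have hρEne : ρE ≠ 0 := ne_of_gt hρE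
    field_simp
  · rw [integral_const_mul _ _]
    congr 1
    rw [integral_finset_sum _ fun k _ => integrable_finset_sum _
      fun t _ => (integrableOn_pow_exp _ hs).const_mul _]
    refine Finset.sum_congr rfl fun k _ => ?_
    rw [integral_finset_sum _ fun t _ => (integrableOn_pow_exp _ hs).const_mul _]
    refine Finset.sum_congr rfl fun t ht => ?_
    have htk : t ≤ k := Nat.lt_succ_iff.mp (Finset.mem_range.mp ht)
    rw [integral_const_mul _ _, integral_pow_exp _ hs]
    have e1 : mE - n - 1 + (k - t) = mE - n + k - t - 1 := by omega
    have e2 : mE - n + k - t - 1 + 1 = mE - n + k - t := by omega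
    rw [e1, e2, zpow_neg, zpow_natCast]
    have hch : (k.choose t : ℝ) = (k.factorial : ℝ) / ((t.factorial : ℝ) * ((k - t).factorial : ℝ)) :=
      Nat.cast_choose ℝ htk
    rw [hch]
    have hkf : (k.factorial : ℝ) ≠ 0 := Nat.cast_ne_zero.mpr k.factorial_ne_zero
    have htf : (t.factorial : ℝ) ≠ 0 := Nat.cast_ne_zero.mpr t.factorial_ne_zero
    have hktf : ((k - t).factorial : ℝ) ≠ 0 := Nat.cast_ne_zero.mpr (k - t).factorial_ne_zero
    have hmf : ((mE - n - 1).factorial : ℝ) ≠ 0 := Nat.cast_ne_zero.mpr (mE - n - 1).factorial_ne_zero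
    have hρBne : ρB ≠ 0 := ne_of_gt hρB
    have hρEne : ρE ≠ 0 := ne_of_gt hρE
    have hsne : (1 / ρE + Rs / ρB) ^ (mE - n + k - t) ≠ 0 := by positivity
    field_simp

lemma integrand_eq (mB mE : ℕ) (KB KE ρB ρE Rs : ℝ) (γ : ℝ) :
    rsCDF mB KB ρB (Rs * γ + Rs - 1) * rsPDF mE KE ρE γ =
      ∑ l ∈ Finset.range mB, ∑ n ∈ Finset.range mE, Gterm mB mE KB KE ρB ρE Rs l n γ := by
  unfold rsCDF rsPDF Gterm
  rw [Finset.sum_mul_sum]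
  refine Finset.sum_congr rfl fun l _ => Finset.sum_congr rfl fun n hn => ?_
  have hexp1 : Real.exp (-(Rs * γ + Rs - 1) / ρB)
      = Real.exp (-(Rs - 1) / ρB) * Real.exp (-(Rs / ρB * γ)) := by
    rw [← Real.exp_add]; congr 1; ring
  have hexp2 : Real.exp (-γ / ρE) = Real.exp (-(1 / ρE * γ)) := by congr 1; ring
  have hexp3 : Real.exp (-((1 / ρE + Rs / ρB) * γ))
      = Real.exp (-(1 / ρE * γ)) * Real.exp (-(Rs / ρB * γ)) := by
    rw [← Real.exp_add]; congr 1; ring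
  have hbin : ∀ k : ℕ, (Rs * γ + Rs - 1) ^ k
      = ∑ t ∈ Finset.range (k + 1), (Rs - 1) ^ t * (Rs * γ) ^ (k - t) * (k.choose t : ℝ) := by
    intro k; rw [show Rs * γ + Rs - 1 = (Rs - 1) + Rs * γ by ring, add_pow]
  rw [hexp1, hexp2]
  simp_rw [hbin, hexp3]
  have hsum : (∑ k ∈ Finset.range (mB - l),
        (∑ t ∈ Finset.range (k + 1), (Rs - 1) ^ t * (Rs * γ) ^ (k - t) * (k.choose t : ℝ)) /
          (ρB ^ k * (k.factorial : ℝ)))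
        * (γ ^ (mE - n - 1) * (Real.exp (-(1 / ρE * γ)) * Real.exp (-(Rs / ρB * γ)))
            / (ρE ^ (mE - n) * ((mE - n - 1).factorial : ℝ)))
      = ∑ k ∈ Finset.range (mB - l), ∑ t ∈ Finset.range (k + 1),
          (k.choose t : ℝ) * (Rs - 1) ^ t * Rs ^ (k - t) /
              (ρB ^ k * (k.factorial : ℝ) *
                (ρE ^ (mE - n) * ((mE - n - 1).factorial : ℝ))) *
            (γ ^ ((mE - n - 1) + (k - t)) *
              (Real.exp (-(1 / ρE * γ)) * Real.exp (-(Rs / ρB * γ)))) := by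
    rw [Finset.sum_mul]
    refine Finset.sum_congr rfl fun k _ => ?_
    rw [Finset.sum_div, Finset.sum_mul]
    refine Finset.sum_congr rfl fun t _ => ?_
    rw [mul_pow, pow_add]
    ring
  rw [← hsum]; ring

lemma rs_intOn (mB mE : ℕ) (KB KE : ℝ) {ρB ρE Rs : ℝ}
    (hρB : 0 < ρB) (hρE : 0 < ρE) (hRs : 1 ≤ Rs) :
    IntegrableOn (fun γ => rsCDF mB KB ρB (Rs * γ + Rs - 1) * rsPDF mE KE ρE γ)
      (Set.Ioi 0) := by
  have h : (fun γ => rsCDF mB KB ρB (Rs * γ + Rs - 1) * rsPDF mE KE ρE γ)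
      = fun γ => ∑ l ∈ Finset.range mB, ∑ n ∈ Finset.range mE,
          Gterm mB mE KB KE ρB ρE Rs l n γ := funext fun γ => integrand_eq mB mE KB KE ρB ρE Rs γ
  rw [h]
  exact integrable_finset_sum _ fun l _ => integrable_finset_sum _ fun n _ =>
    Gterm_integrable mB mE KB KE hρB hρE hRs l n

lemma rs_sop (mB mE : ℕ) (KB KE : ℝ) {ρB ρE Rs : ℝ}
    (hρB : 0 < ρB) (hρE : 0 < ρE) (hRs : 1 ≤ Rs) :
    ∫ γ in Set.Ioi (0:ℝ), rsCDF mB KB ρB (Rs * γ + Rs - 1) * rsPDF mE KE ρE γ =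
      ∑ l ∈ Finset.range mB, ∑ n ∈ Finset.range mE,
        Bcoef mB KB l * Bcoef mE KE n *
          (1 - Real.exp (-(Rs - 1) / ρB) *
            ∑ k ∈ Finset.range (mB - l), ∑ t ∈ Finset.range (k + 1),
              (Rs - 1) ^ t * Rs ^ (k - t) * ((mE - n + k - t - 1).factorial : ℝ) /
                  (ρB ^ k * ρE ^ (mE - n) * (t.factorial : ℝ) * ((k - t).factorial : ℝ) *
                    ((mE - n - 1).factorial : ℝ)) *
                (1 / ρE + Rs / ρB) ^ (-((mE - n + k - t : ℕ) : ℤ))) := by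
  simp_rw [integrand_eq mB mE KB KE ρB ρE Rs]
  rw [integral_finset_sum _ fun l _ => integrable_finset_sum _ fun n _ =>
    Gterm_integrable mB mE KB KE hρB hρE hRs l n]
  refine Finset.sum_congr rfl fun l _ => ?_
  rw [integral_finset_sum _ fun n _ => Gterm_integrable mB mE KB KE hρB hρE hRs l n]
  exact Finset.sum_congr rfl fun n hn =>
    Gterm_integral mB mE KB KE hρB hρE hRs l n (Finset.mem_range.mp hn)

/-- Closed-form secrecy outage probability over ARS fading channels (integer `m`):
`P_o = Σᵢ Σⱼ Q_{B,i} Q_{E,j} W_{i,j}`. -/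
theorem sop_closed_form (mB mE : ℕ) (hmB : 0 < mB) (hmE : 0 < mE)
    (KB1 KB2 KE1 KE2 : ℝ) (hKB1 : 0 < KB1) (hKB2 : 0 < KB2)
    (hKE1 : 0 < KE1) (hKE2 : 0 < KE2)
    (ρB1 ρB2 ρE1 ρE2 : ℝ) (hρB1 : 0 < ρB1) (hρB2 : 0 < ρB2)
    (hρE1 : 0 < ρE1) (hρE2 : 0 < ρE2)
    (pB pE : ℝ) (hpB : pB ∈ Set.Icc (0 : ℝ) 1) (hpE : pE ∈ Set.Icc (0 : ℝ) 1)
    (Rs : ℝ) (hRs : 1 ≤ Rs) :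
    ∫ γ in Set.Ioi (0 : ℝ),
        arsCDF pB mB KB1 KB2 ρB1 ρB2 (Rs * γ + Rs - 1) *
          arsPDF pE mE KE1 KE2 ρE1 ρE2 γ =
      ∑ i : Fin 2, ∑ j : Fin 2,
        (![pB, 1 - pB] i) * (![pE, 1 - pE] j) *
          (∑ l ∈ Finset.range mB, ∑ n ∈ Finset.range mE,
            Bcoef mB (![KB1, KB2] i) l * Bcoef mE (![KE1, KE2] j) n *
              (1 - Real.exp (-(Rs - 1) / ![ρB1, ρB2] i) *
                ∑ k ∈ Finset.range (mB - l), ∑ t ∈ Finset.range (k + 1),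
                  (Rs - 1) ^ t * Rs ^ (k - t) *
                      ((mE - n + k - t - 1).factorial : ℝ) /
                      ((![ρB1, ρB2] i) ^ k * (![ρE1, ρE2] j) ^ (mE - n) *
                        (t.factorial : ℝ) * ((k - t).factorial : ℝ) *
                        ((mE - n - 1).factorial : ℝ)) *
                    (1 / ![ρE1, ρE2] j + Rs / ![ρB1, ρB2] i) ^
                      (-((mE - n + k - t : ℕ) : ℤ)))) := by
  have hpt : ∀ γ : ℝ,
      arsCDF pB mB KB1 KB2 ρB1 ρB2 (Rs * γ + Rs - 1) * arsPDF pE mE KE1 KE2 ρE1 ρE2 γ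
        = pB * pE * (rsCDF mB KB1 ρB1 (Rs * γ + Rs - 1) * rsPDF mE KE1 ρE1 γ)
          + (pB * (1 - pE) * (rsCDF mB KB1 ρB1 (Rs * γ + Rs - 1) * rsPDF mE KE2 ρE2 γ)
          + ((1 - pB) * pE * (rsCDF mB KB2 ρB2 (Rs * γ + Rs - 1) * rsPDF mE KE1 ρE1 γ)
          + (1 - pB) * (1 - pE) * (rsCDF mB KB2 ρB2 (Rs * γ + Rs - 1) * rsPDF mE KE2 ρE2 γ))) :=
    fun γ => by simp only [arsCDF, arsPDF]; ring
  simp_rw [hpt]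
  have I11 := rs_intOn mB mE KB1 KE1 hρB1 hρE1 hRs
  have I12 := rs_intOn mB mE KB1 KE2 hρB1 hρE2 hRs
  have I21 := rs_intOn mB mE KB2 KE1 hρB2 hρE1 hRs
  have I22 := rs_intOn mB mE KB2 KE2 hρB2 hρE2 hRs
  have J11 : IntegrableOn (fun γ => pB * pE *
      (rsCDF mB KB1 ρB1 (Rs * γ + Rs - 1) * rsPDF mE KE1 ρE1 γ)) (Set.Ioi 0) :=
    I11.const_mul _
  have J12 : IntegrableOn (fun γ => pB * (1 - pE) *
      (rsCDF mB KB1 ρB1 (Rs * γ + Rs - 1) * rsPDF mE KE2 ρE2 γ)) (Set.Ioi 0) :=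
    I12.const_mul _
  have J21 : IntegrableOn (fun γ => (1 - pB) * pE *
      (rsCDF mB KB2 ρB2 (Rs * γ + Rs - 1) * rsPDF mE KE1 ρE1 γ)) (Set.Ioi 0) :=
    I21.const_mul _
  have J22 : IntegrableOn (fun γ => (1 - pB) * (1 - pE) *
      (rsCDF mB KB2 ρB2 (Rs * γ + Rs - 1) * rsPDF mE KE2 ρE2 γ)) (Set.Ioi 0) :=
    I22.const_mul _
  have J34 : IntegrableOn (fun γ => (1 - pB) * pE *
      (rsCDF mB KB2 ρB2 (Rs * γ + Rs - 1) * rsPDF mE KE1 ρE1 γ)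
      + (1 - pB) * (1 - pE) *
      (rsCDF mB KB2 ρB2 (Rs * γ + Rs - 1) * rsPDF mE KE2 ρE2 γ)) (Set.Ioi 0) := J21.add J22
  have J234 : IntegrableOn (fun γ => pB * (1 - pE) *
      (rsCDF mB KB1 ρB1 (Rs * γ + Rs - 1) * rsPDF mE KE2 ρE2 γ)
      + ((1 - pB) * pE *
      (rsCDF mB KB2 ρB2 (Rs * γ + Rs - 1) * rsPDF mE KE1 ρE1 γ)
      + (1 - pB) * (1 - pE) *
      (rsCDF mB KB2 ρB2 (Rs * γ + Rs - 1) * rsPDF mE KE2 ρE2 γ))) (Set.Ioi 0) := J12.add J34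
  rw [integral_add J11 J234, integral_add J12 J34, integral_add J21 J22,
    integral_const_mul, integral_const_mul, integral_const_mul, integral_const_mul,
    rs_sop mB mE KB1 KE1 hρB1 hρE1 hRs, rs_sop mB mE KB1 KE2 hρB1 hρE2 hRs,
    rs_sop mB mE KB2 KE1 hρB2 hρE1 hRs, rs_sop mB mE KB2 KE2 hρB2 hρE2 hRs]
  simp only [Fin.sum_univ_two, Matrix.cons_val_zero, Matrix.cons_val_one, Matrix.head_cons]
  ring
end

section
/- Let m_B, m_E be positive integers, K_B, K_E > 0, ρ_B, ρ_E > 0 real. Let f_B = f_{m_B,K_B,ρ_B} be the integer-parameter Rician shadowed PDF of the main channel and F_E = F_{m_E,K_E,ρ_E} the integer-parameter Rician shadowed CDF of the eavesdropper channel. Then ∫₀^∞ F_E(γ)·f_B(γ) dγ = Σ_{l=0}^{m_E−1} Σ_{n=0}^{m_B−1} B_l(m_E,K_E)·B_n(m_B,K_B)·( 1 − Σ_{k=0}^{m_E−l−1} (k + m_B − n − 1)! / [ ρ_B^{m_B−n} · ρ_E^k · (m_B−n−1)! · k! ] · (1/ρ_B + 1/ρ_E)^{−(k+m_B−n)} ).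 -/
open MeasureTheory Filter Finset Real

private lemma int_pow_exp (a : ℕ) {b : ℝ} (hb : 0 < b) :
    MeasureTheory.IntegrableOn (fun t : ℝ => t ^ a * Real.exp (-(b * t))) (Set.Ioi 0) := by
  have base : MeasureTheory.IntegrableOn (fun t : ℝ => t ^ a * Real.exp (-t)) (Set.Ioi 0) := by
    have := Real.GammaIntegral_convergent (s := (a + 1 : ℝ)) (by positivity)
    refine this.congr_fun (fun x hx => ?_) measurableSet_Ioi
    dsimp only; rw [add_sub_cancel_right, Real.rpow_natCast, mul_comm]
  have h2 : MeasureTheory.IntegrableOn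
      (fun t : ℝ => (b * t) ^ a * Real.exp (-(b * t))) (Set.Ioi 0) := by
    have := (integrableOn_Ioi_comp_mul_left_iff
      (fun t : ℝ => t ^ a * Real.exp (-t)) 0 hb).2 (by simpa using base)
    simpa using this
  have h3 : MeasureTheory.IntegrableOn
      (fun t : ℝ => ((b : ℝ) ^ a)⁻¹ * ((b * t) ^ a * Real.exp (-(b * t)))) (Set.Ioi 0) :=
    h2.const_mul _
  refine h3.congr_fun (fun x hx => ?_) measurableSet_Ioi
  dsimp only; rw [mul_pow]
  field_simp

private lemma int_pow_exp_val (a : ℕ) {b : ℝ} (hb : 0 < b) :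
    ∫ t in Set.Ioi (0:ℝ), t ^ a * Real.exp (-(b * t)) = (a.factorial : ℝ) / b ^ (a + 1) := by
  have := Real.integral_rpow_mul_exp_neg_mul_Ioi (a := (a + 1 : ℝ)) (r := b) (by positivity) hb
  rw [show ((a:ℝ)+1) - 1 = (a:ℝ) by ring] at this
  have heq : ∫ t in Set.Ioi (0:ℝ), t ^ a * Real.exp (-(b * t))
      = ∫ t in Set.Ioi (0:ℝ), t ^ (a:ℝ) * Real.exp (-(b * t)) := by
    refine setIntegral_congr_fun measurableSet_Ioi (fun x hx => ?_)
    rw [Real.rpow_natCast]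
  have hpow : (1/b:ℝ) ^ ((a:ℝ)+1) = (1/b) ^ (a+1) := by
    rw [show ((a:ℝ)+1) = ((a+1:ℕ):ℝ) by push_cast; ring, Real.rpow_natCast]
  rw [heq, this, Real.Gamma_nat_eq_factorial, hpow, div_pow, one_pow]
  ring

/-- One branch pair of the closed-form probability of non-zero secrecy capacity
(integer `m`). -/
theorem pnz_branch_pair (mB mE : ℕ) (hmB : 0 < mB) (hmE : 0 < mE)
    (KB KE ρB ρE : ℝ) (hKB : 0 < KB) (hKE : 0 < KE) (hρB : 0 < ρB) (hρE : 0 < ρE) :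
    ∫ γ in Set.Ioi (0 : ℝ), rsCDF mE KE ρE γ * rsPDF mB KB ρB γ =
      ∑ l ∈ Finset.range mE, ∑ n ∈ Finset.range mB,
        Bcoef mE KE l * Bcoef mB KB n *
          (1 - ∑ k ∈ Finset.range (mE - l),
            ((k + mB - n - 1).factorial : ℝ) /
                (ρB ^ (mB - n) * ρE ^ k * ((mB - n - 1).factorial : ℝ) *
                  (k.factorial : ℝ)) *
              (1 / ρB + 1 / ρE) ^ (-((k + mB - n : ℕ) : ℤ))) := by
  have hc : (0:ℝ) < 1/ρB := by positivity
  have hs : (0:ℝ) < 1/ρB + 1/ρE := by positivity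
  -- pointwise rewriting of the integrand
  have hfun : ∀ γ : ℝ, rsCDF mE KE ρE γ * rsPDF mB KB ρB γ =
      ∑ l ∈ Finset.range mE, ∑ n ∈ Finset.range mB,
        (Bcoef mE KE l * Bcoef mB KB n /
            (ρB ^ (mB - n) * ((mB - n - 1).factorial : ℝ))) *
          (γ ^ (mB - n - 1) * Real.exp (-((1/ρB) * γ)) -
            ∑ k ∈ Finset.range (mE - l),
              (1 / (ρE ^ k * (k.factorial : ℝ))) *
                (γ ^ (k + (mB - n - 1)) * Real.exp (-((1/ρB + 1/ρE) * γ)))) := by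
    intro γ
    unfold rsCDF rsPDF
    rw [Finset.sum_mul_sum]
    refine Finset.sum_congr rfl fun l _ => Finset.sum_congr rfl fun n _ => ?_
    have hB : Real.exp (-γ / ρB) = Real.exp (-((1/ρB) * γ)) := by ring_nf
    have hE : Real.exp (-((1/ρB + 1/ρE) * γ)) =
        Real.exp (-γ / ρE) * Real.exp (-γ / ρB) := by
      rw [← Real.exp_add]; ring_nf
    simp only [hE, ← hB, pow_add, mul_sub, sub_mul, Finset.mul_sum, Finset.sum_mul, mul_one]
    congr 1
    · ring
    · exact Finset.sum_congr rfl fun k _ => by ring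
  rw [MeasureTheory.setIntegral_congr_fun measurableSet_Ioi (fun γ _ => hfun γ)]
  -- integrability of the building blocks
  have hint1 : ∀ n : ℕ, MeasureTheory.IntegrableOn
      (fun γ : ℝ => γ ^ (mB - n - 1) * Real.exp (-((1/ρB) * γ))) (Set.Ioi 0) :=
    fun n => int_pow_exp _ hc
  have hint2 : ∀ l n : ℕ, MeasureTheory.IntegrableOn
      (fun γ : ℝ => ∑ k ∈ Finset.range (mE - l),
        (1 / (ρE ^ k * (k.factorial : ℝ))) *
          (γ ^ (k + (mB - n - 1)) * Real.exp (-((1/ρB + 1/ρE) * γ)))) (Set.Ioi 0) :=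
    fun l n => MeasureTheory.integrable_finset_sum _
      fun k _ => (int_pow_exp _ hs).const_mul _
  have hint3 : ∀ l n : ℕ, MeasureTheory.IntegrableOn
      (fun γ : ℝ =>
        (Bcoef mE KE l * Bcoef mB KB n /
            (ρB ^ (mB - n) * ((mB - n - 1).factorial : ℝ))) *
          (γ ^ (mB - n - 1) * Real.exp (-((1/ρB) * γ)) -
            ∑ k ∈ Finset.range (mE - l),
              (1 / (ρE ^ k * (k.factorial : ℝ))) *
                (γ ^ (k + (mB - n - 1)) * Real.exp (-((1/ρB + 1/ρE) * γ)))))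
      (Set.Ioi 0) :=
    fun l n => ((hint1 n).sub (hint2 l n)).const_mul _
  rw [MeasureTheory.integral_finset_sum _
    (fun l _ => MeasureTheory.integrable_finset_sum _ fun n _ => hint3 l n)]
  refine Finset.sum_congr rfl fun l _ => ?_
  rw [MeasureTheory.integral_finset_sum _ fun n _ => hint3 l n]
  refine Finset.sum_congr rfl fun n hn => ?_
  have hnm : n < mB := Finset.mem_range.mp hn
  rw [MeasureTheory.integral_const_mul,
    MeasureTheory.integral_sub (hint1 n) (hint2 l n),
    MeasureTheory.integral_finset_sum _
      (fun k _ => (int_pow_exp _ hs).const_mul _),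
    int_pow_exp_val _ hc]
  have hval : ∀ k : ℕ,
      (∫ γ in Set.Ioi (0:ℝ),
        (1 / (ρE ^ k * (k.factorial : ℝ))) *
          (γ ^ (k + (mB - n - 1)) * Real.exp (-((1/ρB + 1/ρE) * γ)))) =
      (1 / (ρE ^ k * (k.factorial : ℝ))) *
        (((k + (mB - n - 1)).factorial : ℝ) /
          (1/ρB + 1/ρE) ^ (k + (mB - n - 1) + 1)) := by
    intro k
    rw [MeasureTheory.integral_const_mul, int_pow_exp_val _ hs]
  simp only [hval]
  -- final algebra
  obtain ⟨a, ha⟩ : ∃ a, mB - n = a + 1 := ⟨mB - n - 1, by omega⟩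
  have ha1 : mB - n - 1 = a := by omega
  have hka : ∀ k : ℕ, k + mB - n - 1 = k + a := fun k => by omega
  have hka2 : ∀ k : ℕ, k + mB - n = k + a + 1 := fun k => by omega
  simp only [ha, ha1, hka, hka2]
  have hρBne : (ρB : ℝ) ≠ 0 := ne_of_gt hρB
  have hρEne : (ρE : ℝ) ≠ 0 := ne_of_gt hρE
  have hsne : (1/ρB + 1/ρE : ℝ) ≠ 0 := ne_of_gt hs
  have hafac : ((a.factorial : ℝ)) ≠ 0 := Nat.cast_ne_zero.mpr a.factorial_ne_zero
  rw [mul_sub, mul_sub, Finset.mul_sum, Finset.mul_sum]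
  congr 1
  · rw [div_pow, one_pow]
    field_simp
    simp only [Nat.add_sub_cancel]
    all_goals (first | ring1 | (left; exact True.intro) | (left; ring1))
  · refine Finset.sum_congr rfl fun k _ => ?_
    have hkfac : ((k.factorial : ℝ)) ≠ 0 := Nat.cast_ne_zero.mpr k.factorial_ne_zero
    rw [show (-((k + a + 1 : ℕ) : ℤ)) = -((k + a + 1 : ℕ) : ℤ) from rfl,
      zpow_neg, zpow_natCast]
    field_simp
    simp only [Nat.add_sub_cancel]
    all_goals (first | ring1 | (left; exact True.intro) | (left; ring1))
end

section
/- Let m_B, m_E be positive integers, K_{B,1}, K_{B,2}, K_{E,1}, K_{E,2} > 0, ρ_{E,1}, ρ_{E,2} > 0, c₁, c₂ > 0 real, p_B, p_E ∈ [0,1], and R_s ≥ 1 real. For s > 0, let F_B^{(s)} be the ARS CDF with parameters (p_B, m_B, K_{B,1}, K_{B,2}, c₁·s, c₂·s) and let f_E^{ARS} be the ARS PDF with parameters (p_E, m_E, K_{E,1}, K_{E,2}, ρ_{E,1}, ρ_{E,2}). Then the secrecy outage probability P_o(s) = ∫₀^∞ F_B^{(s)}(R_s·γ + R_s − 1)·f_E^{ARS}(γ)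 dγ is strictly positive for every s > 0, and the secrecy diversity order equals one: lim_{s→∞} [ − ln P_o(s) / ln s ] = 1. -/
open MeasureTheory Filter Finset Real

lemma Bcoef_nonneg {m : ℕ} {K : ℝ} (hK : 0 < K) (n : ℕ) : 0 ≤ Bcoef m K n := by
  have h : (0:ℝ) < K + m := by positivity
  unfold Bcoef; positivity

lemma Bcoef_sum {m : ℕ} {K : ℝ} (hm : 0 < m) (hK : 0 < K) :
    ∑ n ∈ Finset.range m, Bcoef m K n = 1 := by
  have h : (0:ℝ) < K + m := by positivity
  have hx : (m : ℝ) / (K + m) + K / (K + m) = 1 := by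
    rw [← add_div, div_eq_one_iff_eq (ne_of_gt h)]; ring
  have hadd := add_pow ((m : ℝ) / (K + m)) (K / (K + m)) (m - 1)
  rw [hx, one_pow] at hadd
  have hm1 : m - 1 + 1 = m := Nat.succ_pred_eq_of_pos hm
  rw [hm1] at hadd
  rw [hadd]
  refine Finset.sum_congr rfl fun n hn => ?_
  unfold Bcoef; ring

lemma Bcoef_last_pos {m : ℕ} {K : ℝ} (hm : 0 < m) (hK : 0 < K) :
    0 < Bcoef m K (m - 1) := by
  have h : (0:ℝ) < K + m := by positivity
  have hm' : (0:ℝ) < (m:ℝ) := by exact_mod_cast hm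
  unfold Bcoef
  rw [Nat.choose_self, Nat.sub_self]
  simp only [Nat.cast_one, pow_zero]
  positivity

lemma exp_mul_sum_le_one {M : ℕ} {t : ℝ} (ht : 0 ≤ t) :
    Real.exp (-t) * ∑ k ∈ Finset.range M, t ^ k / (k.factorial : ℝ) ≤ 1 := by
  have h := Real.sum_le_exp_of_nonneg ht M
  calc Real.exp (-t) * ∑ k ∈ Finset.range M, t ^ k / (k.factorial : ℝ)
      ≤ Real.exp (-t) * Real.exp t := by
        exact mul_le_mul_of_nonneg_left h (Real.exp_nonneg _)
    _ = 1 := by rw [← Real.exp_add]; simp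

lemma one_le_sum_exp {M : ℕ} (hM : 0 < M) {t : ℝ} (ht : 0 ≤ t) :
    1 ≤ ∑ k ∈ Finset.range M, t ^ k / (k.factorial : ℝ) := by
  have h0 : (0:ℕ) ∈ Finset.range M := Finset.mem_range.2 hM
  have := Finset.single_le_sum (f := fun k => t ^ k / (k.factorial : ℝ))
    (fun k _ => by positivity) h0
  simpa using this

lemma one_sub_exp_le {t : ℝ} : 1 - Real.exp (-t) ≤ t := by
  have := Real.add_one_le_exp (-t); linarith

lemma mul_exp_le_one_sub_exp {t : ℝ} (ht : 0 ≤ t) :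
    t * Real.exp (-t) ≤ 1 - Real.exp (-t) := by
  have h := Real.add_one_le_exp t
  have h2 : Real.exp (-t) * (t + 1) ≤ 1 := by
    rw [Real.exp_neg]
    rw [inv_mul_le_iff₀ (Real.exp_pos t)]
    simpa [mul_comm] using h
  nlinarith [Real.exp_pos (-t)]

lemma inner_sum_eq {ρ : ℝ} (hρ : ρ ≠ 0) (γ : ℝ) (M : ℕ) :
    ∑ k ∈ Finset.range M, γ ^ k / (ρ ^ k * (k.factorial : ℝ))
      = ∑ k ∈ Finset.range M, (γ / ρ) ^ k / (k.factorial : ℝ) := by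
  refine Finset.sum_congr rfl fun k _ => ?_
  rw [div_pow, div_div]

lemma rsCDF_term_nonneg {m : ℕ} {K ρ : ℝ} (hK : 0 < K) (hρ : 0 < ρ) {γ : ℝ}
    (hγ : 0 ≤ γ) (j : ℕ) :
    0 ≤ Bcoef m K j * (1 - Real.exp (-γ / ρ) *
        ∑ k ∈ Finset.range (m - j), γ ^ k / (ρ ^ k * (k.factorial : ℝ))) := by
  have ht : 0 ≤ γ / ρ := by positivity
  refine mul_nonneg (Bcoef_nonneg hK j) ?_
  rw [inner_sum_eq (ne_of_gt hρ), neg_div]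
  linarith [exp_mul_sum_le_one (M := m - j) ht]

lemma rsCDF_nonneg {m : ℕ} {K ρ : ℝ} (hK : 0 < K) (hρ : 0 < ρ) {γ : ℝ} (hγ : 0 ≤ γ) :
    0 ≤ rsCDF m K ρ γ :=
  Finset.sum_nonneg fun j _ => rsCDF_term_nonneg hK hρ hγ j

lemma rsCDF_le_one {m : ℕ} {K ρ : ℝ} (hm : 0 < m) (hK : 0 < K) (hρ : 0 < ρ)
    {γ : ℝ} (hγ : 0 ≤ γ) : rsCDF m K ρ γ ≤ 1 := by
  have ht : 0 ≤ γ / ρ := by positivity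
  calc rsCDF m K ρ γ ≤ ∑ j ∈ Finset.range m, Bcoef m K j := by
        refine Finset.sum_le_sum fun j hj => ?_
        have hB := Bcoef_nonneg (m := m) hK j
        have hS : 0 ≤ Real.exp (-γ / ρ) *
            ∑ k ∈ Finset.range (m - j), γ ^ k / (ρ ^ k * (k.factorial : ℝ)) := by
          refine mul_nonneg (Real.exp_nonneg _) (Finset.sum_nonneg fun k _ => by positivity)
        nlinarith
    _ = 1 := Bcoef_sum hm hK

lemma rsCDF_le {m : ℕ} {K ρ : ℝ} (hm : 0 < m) (hK : 0 < K) (hρ : 0 < ρ)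
    {γ : ℝ} (hγ : 0 ≤ γ) : rsCDF m K ρ γ ≤ γ / ρ := by
  have ht : 0 ≤ γ / ρ := by positivity
  calc rsCDF m K ρ γ ≤ ∑ j ∈ Finset.range m, Bcoef m K j * (γ / ρ) := by
        refine Finset.sum_le_sum fun j hj => ?_
        have hB := Bcoef_nonneg (m := m) hK j
        refine mul_le_mul_of_nonneg_left ?_ hB
        have hM : 0 < m - j := Nat.sub_pos_of_lt (Finset.mem_range.1 hj)
        have h1 : 1 ≤ ∑ k ∈ Finset.range (m - j), (γ/ρ) ^ k / (k.factorial : ℝ) :=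
          one_le_sum_exp hM ht
        have h2 : Real.exp (-(γ/ρ)) * 1 ≤ Real.exp (-(γ/ρ)) *
            ∑ k ∈ Finset.range (m - j), (γ/ρ) ^ k / (k.factorial : ℝ) :=
          mul_le_mul_of_nonneg_left h1 (Real.exp_nonneg _)
        rw [inner_sum_eq (ne_of_gt hρ), neg_div]
        have := one_sub_exp_le (t := γ/ρ)
        rw [mul_one] at h2
        linarith
    _ = γ / ρ := by rw [← Finset.sum_mul, Bcoef_sum hm hK, one_mul]

lemma rsCDF_ge {m : ℕ} {K ρ : ℝ} (hm : 0 < m) (hK : 0 < K) (hρ : 0 < ρ)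
    {γ : ℝ} (hγ : 0 ≤ γ) :
    Bcoef m K (m-1) * ((γ / ρ) * Real.exp (-(γ / ρ))) ≤ rsCDF m K ρ γ := by
  have hmem : m - 1 ∈ Finset.range m := Finset.mem_range.2 (Nat.pred_lt (ne_of_gt hm))
  have hsingle := Finset.single_le_sum
    (f := fun j => Bcoef m K j * (1 - Real.exp (-γ / ρ) *
        ∑ k ∈ Finset.range (m - j), γ ^ k / (ρ ^ k * (k.factorial : ℝ))))
    (fun j _ => rsCDF_term_nonneg hK hρ hγ j) hmem
  have hsub : m - (m - 1) = 1 := by omega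
  have hterm : Bcoef m K (m-1) * (1 - Real.exp (-γ / ρ) *
        ∑ k ∈ Finset.range (m - (m-1)), γ ^ k / (ρ ^ k * (k.factorial : ℝ)))
      = Bcoef m K (m-1) * (1 - Real.exp (-(γ / ρ))) := by
    rw [hsub]; norm_num [neg_div]
  rw [hterm] at hsingle
  refine le_trans ?_ (le_trans hsingle (le_of_eq rfl))
  refine mul_le_mul_of_nonneg_left ?_ (Bcoef_nonneg hK _)
  exact mul_exp_le_one_sub_exp (by positivity)

lemma rsPDF_nonneg {m : ℕ} {K ρ : ℝ} (hK : 0 < K) (hρ : 0 < ρ) {γ : ℝ} (hγ : 0 ≤ γ) :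
    0 ≤ rsPDF m K ρ γ := by
  refine Finset.sum_nonneg fun n _ => ?_
  have := Bcoef_nonneg (m := m) hK n
  positivity

lemma rsPDF_pos {m : ℕ} {K ρ : ℝ} (hm : 0 < m) (hK : 0 < K) (hρ : 0 < ρ)
    {γ : ℝ} (hγ : 0 < γ) : 0 < rsPDF m K ρ γ := by
  refine Finset.sum_pos' (fun n _ => ?_) ⟨m - 1, Finset.mem_range.2 (Nat.pred_lt (ne_of_gt hm)), ?_⟩
  · have := Bcoef_nonneg (m := m) hK n; positivity
  · have h1 : m - (m-1) - 1 = 0 := by omega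
    have h2 : m - (m-1) = 1 := by omega
    rw [h1, h2]
    simp only [pow_zero, pow_one, Nat.factorial_zero, Nat.cast_one, mul_one]
    have := Bcoef_last_pos hm hK
    positivity

lemma integrableOn_pow_exp_s9 (n : ℕ) {ρ : ℝ} (hρ : 0 < ρ) :
    IntegrableOn (fun x : ℝ => x ^ n * Real.exp (-x / ρ)) (Set.Ioi 0) := by
  have h := integrableOn_rpow_mul_exp_neg_mul_rpow (s := (n : ℝ)) (p := 1)
    (lt_of_lt_of_le (by norm_num) (Nat.cast_nonneg n)) one_pos (b := 1/ρ) (by positivity)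
  refine h.congr_fun (fun x _ => ?_) measurableSet_Ioi
  beta_reduce
  rw [Real.rpow_one, Real.rpow_natCast]
  ring_nf

lemma integrableOn_pow_mul_rsPDF (k : ℕ) {m : ℕ} {K ρ : ℝ} (hρ : 0 < ρ) :
    IntegrableOn (fun γ : ℝ => γ ^ k * rsPDF m K ρ γ) (Set.Ioi 0) := by
  have : (fun γ : ℝ => γ ^ k * rsPDF m K ρ γ)
      = fun γ => ∑ n ∈ Finset.range m,
          (Bcoef m K n / (ρ ^ (m - n) * ((m - n - 1).factorial : ℝ)))
            * (γ ^ (k + (m - n - 1)) * Real.exp (-γ / ρ)) := by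
    funext γ
    rw [rsPDF, Finset.mul_sum]
    refine Finset.sum_congr rfl fun n _ => ?_
    rw [pow_add]; ring
  rw [this]
  exact integrable_finset_sum _ fun n _ =>
    ((integrableOn_pow_exp_s9 (k + (m - n - 1)) hρ).const_mul _)

lemma continuous_rsPDF (m : ℕ) (K ρ : ℝ) : Continuous (rsPDF m K ρ) := by
  unfold rsPDF
  refine continuous_finset_sum _ fun n _ => ?_
  fun_prop

lemma continuous_rsCDF (m : ℕ) (K ρ : ℝ) : Continuous (rsCDF m K ρ) := by
  unfold rsCDF
  refine continuous_finset_sum _ fun j _ => ?_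
  refine Continuous.mul continuous_const ?_
  refine Continuous.sub continuous_const ?_
  refine Continuous.mul (by fun_prop) ?_
  refine continuous_finset_sum _ fun k _ => ?_
  fun_prop

lemma convex_le {p a b t : ℝ} (h0 : 0 ≤ p) (h1 : p ≤ 1) (ha : a ≤ t) (hb : b ≤ t) :
    p * a + (1 - p) * b ≤ t := by nlinarith

lemma convex_ge {p a b t : ℝ} (h0 : 0 ≤ p) (h1 : p ≤ 1) (ha : t ≤ a) (hb : t ≤ b) :
    t ≤ p * a + (1 - p) * b := by nlinarith

lemma convex_pos {p a b : ℝ} (h0 : 0 ≤ p) (h1 : p ≤ 1) (ha : 0 < a) (hb : 0 < b) :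
    0 < p * a + (1 - p) * b := by
  rcases lt_or_eq_of_le h1 with h | h
  · have h2 : 0 < (1 - p) * b := mul_pos (by linarith) hb
    nlinarith [mul_nonneg h0 ha.le]
  · rw [← h]; nlinarith

section ars
variable {p : ℝ} {m : ℕ} {K₁ K₂ ρ₁ ρ₂ : ℝ}

lemma arsPDF_nonneg (hp : p ∈ Set.Icc (0:ℝ) 1) (hK₁ : 0 < K₁) (hK₂ : 0 < K₂)
    (hρ₁ : 0 < ρ₁) (hρ₂ : 0 < ρ₂) {γ : ℝ} (hγ : 0 ≤ γ) :
    0 ≤ arsPDF p m K₁ K₂ ρ₁ ρ₂ γ := by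
  obtain ⟨h0, h1⟩ := hp
  have := rsPDF_nonneg (m := m) hK₁ hρ₁ hγ
  have := rsPDF_nonneg (m := m) hK₂ hρ₂ hγ
  unfold arsPDF; nlinarith

lemma arsPDF_pos (hm : 0 < m) (hp : p ∈ Set.Icc (0:ℝ) 1) (hK₁ : 0 < K₁) (hK₂ : 0 < K₂)
    (hρ₁ : 0 < ρ₁) (hρ₂ : 0 < ρ₂) {γ : ℝ} (hγ : 0 < γ) :
    0 < arsPDF p m K₁ K₂ ρ₁ ρ₂ γ := by
  obtain ⟨h0, h1⟩ := hp
  exact convex_pos h0 h1 (rsPDF_pos hm hK₁ hρ₁ hγ) (rsPDF_pos hm hK₂ hρ₂ hγ)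

lemma arsCDF_nonneg (hp : p ∈ Set.Icc (0:ℝ) 1) (hK₁ : 0 < K₁) (hK₂ : 0 < K₂)
    (hρ₁ : 0 < ρ₁) (hρ₂ : 0 < ρ₂) {γ : ℝ} (hγ : 0 ≤ γ) :
    0 ≤ arsCDF p m K₁ K₂ ρ₁ ρ₂ γ := by
  obtain ⟨h0, h1⟩ := hp
  exact convex_ge h0 h1 (rsCDF_nonneg hK₁ hρ₁ hγ) (rsCDF_nonneg hK₂ hρ₂ hγ)

lemma arsCDF_le_one (hm : 0 < m) (hp : p ∈ Set.Icc (0:ℝ) 1) (hK₁ : 0 < K₁) (hK₂ : 0 < K₂)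
    (hρ₁ : 0 < ρ₁) (hρ₂ : 0 < ρ₂) {γ : ℝ} (hγ : 0 ≤ γ) :
    arsCDF p m K₁ K₂ ρ₁ ρ₂ γ ≤ 1 := by
  obtain ⟨h0, h1⟩ := hp
  exact convex_le h0 h1 (rsCDF_le_one hm hK₁ hρ₁ hγ) (rsCDF_le_one hm hK₂ hρ₂ hγ)

lemma arsCDF_le (hm : 0 < m) (hp : p ∈ Set.Icc (0:ℝ) 1) (hK₁ : 0 < K₁) (hK₂ : 0 < K₂)
    {c : ℝ} (hc : 0 < c) (hc₁ : c ≤ ρ₁) (hc₂ : c ≤ ρ₂) {γ : ℝ} (hγ : 0 ≤ γ) :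
    arsCDF p m K₁ K₂ ρ₁ ρ₂ γ ≤ γ / c := by
  obtain ⟨h0, h1⟩ := hp
  have hρ₁ : 0 < ρ₁ := lt_of_lt_of_le hc hc₁
  have hρ₂ : 0 < ρ₂ := lt_of_lt_of_le hc hc₂
  have e1 : rsCDF m K₁ ρ₁ γ ≤ γ / c :=
    (rsCDF_le hm hK₁ hρ₁ hγ).trans (div_le_div_of_nonneg_left hγ hc hc₁)
  have e2 : rsCDF m K₂ ρ₂ γ ≤ γ / c :=
    (rsCDF_le hm hK₂ hρ₂ hγ).trans (div_le_div_of_nonneg_left hγ hc hc₂)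
  exact convex_le h0 h1 e1 e2

lemma arsCDF_ge (hm : 0 < m) (hp : p ∈ Set.Icc (0:ℝ) 1) (hK₁ : 0 < K₁) (hK₂ : 0 < K₂)
    {cl cu : ℝ} (hcl : 0 < cl) (hl₁ : cl ≤ ρ₁) (hl₂ : cl ≤ ρ₂)
    (hu₁ : ρ₁ ≤ cu) (hu₂ : ρ₂ ≤ cu) {γ : ℝ} (hγ : 0 ≤ γ) :
    min (Bcoef m K₁ (m-1)) (Bcoef m K₂ (m-1)) * ((γ / cu) * Real.exp (-(γ / cl)))
      ≤ arsCDF p m K₁ K₂ ρ₁ ρ₂ γ := by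
  obtain ⟨h0, h1⟩ := hp
  have hρ₁ : 0 < ρ₁ := lt_of_lt_of_le hcl hl₁
  have hρ₂ : 0 < ρ₂ := lt_of_lt_of_le hcl hl₂
  have hcu : 0 < cu := lt_of_lt_of_le hρ₁ hu₁
  set b := min (Bcoef m K₁ (m-1)) (Bcoef m K₂ (m-1)) with hb
  have hbpos : 0 < b := lt_min (Bcoef_last_pos hm hK₁) (Bcoef_last_pos hm hK₂)
  have key : ∀ ρ : ℝ, 0 < ρ → cl ≤ ρ → ρ ≤ cu → ∀ K : ℝ, 0 < K →
      b ≤ Bcoef m K (m-1) →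
      b * ((γ / cu) * Real.exp (-(γ / cl))) ≤ rsCDF m K ρ γ := by
    intro ρ hρ hlρ huρ K hK hbK
    refine le_trans ?_ (rsCDF_ge hm hK hρ hγ)
    have hd1 : γ / cu ≤ γ / ρ := div_le_div_of_nonneg_left hγ hρ huρ
    have hd2 : γ / ρ ≤ γ / cl := div_le_div_of_nonneg_left hγ hcl hlρ
    have he : Real.exp (-(γ / cl)) ≤ Real.exp (-(γ / ρ)) :=
      Real.exp_le_exp.mpr (by linarith)
    refine mul_le_mul hbK ?_ (by positivity) (le_of_lt (lt_of_lt_of_le hbpos hbK))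
    refine mul_le_mul hd1 he (Real.exp_nonneg _) (by positivity)
  have e1 := key ρ₁ hρ₁ hl₁ hu₁ K₁ hK₁ (min_le_left _ _)
  have e2 := key ρ₂ hρ₂ hl₂ hu₂ K₂ hK₂ (min_le_right _ _)
  exact convex_ge h0 h1 e1 e2

lemma arsCDF_pos (hm : 0 < m) (hp : p ∈ Set.Icc (0:ℝ) 1) (hK₁ : 0 < K₁) (hK₂ : 0 < K₂)
    (hρ₁ : 0 < ρ₁) (hρ₂ : 0 < ρ₂) {γ : ℝ} (hγ : 0 < γ) :
    0 < arsCDF p m K₁ K₂ ρ₁ ρ₂ γ := by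
  refine lt_of_lt_of_le ?_
    (arsCDF_ge hm hp hK₁ hK₂ (cl := min ρ₁ ρ₂) (cu := max ρ₁ ρ₂)
      (lt_min hρ₁ hρ₂) (min_le_left _ _) (min_le_right _ _)
      (le_max_left _ _) (le_max_right _ _) hγ.le)
  have := Bcoef_last_pos hm hK₁
  have := Bcoef_last_pos hm hK₂
  have hcu : (0:ℝ) < max ρ₁ ρ₂ := lt_of_lt_of_le hρ₁ (le_max_left _ _)
  positivity

lemma integrableOn_pow_mul_arsPDF (k : ℕ) (hρ₁ : 0 < ρ₁) (hρ₂ : 0 < ρ₂) :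
    IntegrableOn (fun γ : ℝ => γ ^ k * arsPDF p m K₁ K₂ ρ₁ ρ₂ γ) (Set.Ioi 0) := by
  have h1 := (integrableOn_pow_mul_rsPDF k (m := m) (K := K₁) hρ₁).const_mul p
  have h2 := (integrableOn_pow_mul_rsPDF k (m := m) (K := K₂) hρ₂).const_mul (1 - p)
  refine IntegrableOn.congr_fun (h1.add h2) (fun γ _ => ?_) measurableSet_Ioi
  simp only [Pi.add_apply]
  unfold arsPDF; ring

lemma continuous_arsPDF : Continuous (arsPDF p m K₁ K₂ ρ₁ ρ₂) :=
  (continuous_const.mul (continuous_rsPDF m K₁ ρ₁)).add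
    (continuous_const.mul (continuous_rsPDF m K₂ ρ₂))

lemma continuous_arsCDF : Continuous (arsCDF p m K₁ K₂ ρ₁ ρ₂) :=
  (continuous_const.mul (continuous_rsCDF m K₁ ρ₁)).add
    (continuous_const.mul (continuous_rsCDF m K₂ ρ₂))

end ars

/-- The secrecy outage probability is strictly positive and the secrecy diversity
order equals one: `lim_{s→∞} (− ln P_o(s) / ln s) = 1`. -/
theorem sop_secrecy_diversity_order (mB mE : ℕ) (hmB : 0 < mB) (hmE : 0 < mE)
    (KB1 KB2 KE1 KE2 : ℝ) (hKB1 : 0 < KB1) (hKB2 : 0 < KB2)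
    (hKE1 : 0 < KE1) (hKE2 : 0 < KE2)
    (ρE1 ρE2 c1 c2 : ℝ) (hρE1 : 0 < ρE1) (hρE2 : 0 < ρE2)
    (hc1 : 0 < c1) (hc2 : 0 < c2)
    (pB pE : ℝ) (hpB : pB ∈ Set.Icc (0 : ℝ) 1) (hpE : pE ∈ Set.Icc (0 : ℝ) 1)
    (Rs : ℝ) (hRs : 1 ≤ Rs) :
    let Po : ℝ → ℝ := fun s =>
      ∫ γ in Set.Ioi (0 : ℝ),
        arsCDF pB mB KB1 KB2 (c1 * s) (c2 * s) (Rs * γ + Rs - 1) *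
          arsPDF pE mE KE1 KE2 ρE1 ρE2 γ
    (∀ s : ℝ, 0 < s → 0 < Po s) ∧
      Filter.Tendsto (fun s : ℝ => -Real.log (Po s) / Real.log s)
        Filter.atTop (nhds 1) := by
  intro Po
  set fE : ℝ → ℝ := arsPDF pE mE KE1 KE2 ρE1 ρE2 with hfEdef
  set g : ℝ → ℝ → ℝ := fun s γ =>
      arsCDF pB mB KB1 KB2 (c1 * s) (c2 * s) (Rs * γ + Rs - 1) * fE γ with hgdef
  have hPo : ∀ s, Po s = ∫ γ in Set.Ioi (0:ℝ), g s γ := fun s => rfl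
  have hRs0 : 0 < Rs := lt_of_lt_of_le one_pos hRs
  have harg : ∀ γ : ℝ, 0 ≤ γ → γ ≤ Rs * γ + Rs - 1 := by intro γ h; nlinarith
  have harg0 : ∀ γ : ℝ, 0 ≤ γ → 0 ≤ Rs * γ + Rs - 1 := fun γ h => le_trans h (harg γ h)
  have hfE_nonneg : ∀ γ : ℝ, 0 ≤ γ → 0 ≤ fE γ :=
    fun γ h => arsPDF_nonneg hpE hKE1 hKE2 hρE1 hρE2 h
  have hfE_pos : ∀ γ : ℝ, 0 < γ → 0 < fE γ :=
    fun γ h => arsPDF_pos hmE hpE hKE1 hKE2 hρE1 hρE2 h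
  have hfE_int : ∀ k : ℕ, IntegrableOn (fun γ : ℝ => γ ^ k * fE γ) (Set.Ioi 0) :=
    fun k => integrableOn_pow_mul_arsPDF k hρE1 hρE2
  have hfE_int0 : IntegrableOn fE (Set.Ioi 0) :=
    (hfE_int 0).congr_fun (fun γ _ => by simp) measurableSet_Ioi
  set cmin : ℝ := min c1 c2 with hcmindef
  set cmax : ℝ := max c1 c2 with hcmaxdef
  have hcmin : 0 < cmin := lt_min hc1 hc2
  have hcmax : 0 < cmax := lt_of_lt_of_le hc1 (le_max_left _ _)
  -- continuity and integrability of the integrand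
  have hg_cont : ∀ s : ℝ, Continuous (g s) := by
    intro s
    exact (continuous_arsCDF.comp (by continuity)).mul continuous_arsPDF
  have hg_nonneg : ∀ s : ℝ, 0 < s → ∀ γ : ℝ, 0 < γ → 0 ≤ g s γ := by
    intro s hs γ hγ
    exact mul_nonneg (arsCDF_nonneg hpB hKB1 hKB2 (by positivity) (by positivity)
      (harg0 γ hγ.le)) (hfE_nonneg γ hγ.le)
  have hg_pos : ∀ s : ℝ, 0 < s → ∀ γ : ℝ, 0 < γ → 0 < g s γ := by
    intro s hs γ hγ
    refine mul_pos (arsCDF_pos hmB hpB hKB1 hKB2 (by positivity) (by positivity) ?_)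
      (hfE_pos γ hγ)
    exact lt_of_lt_of_le hγ (harg γ hγ.le)
  have hg_int : ∀ s : ℝ, 0 < s → IntegrableOn (g s) (Set.Ioi 0) := by
    intro s hs
    refine Integrable.mono hfE_int0 ((hg_cont s).aestronglyMeasurable.restrict) ?_
    rw [ae_restrict_iff' measurableSet_Ioi]
    refine ae_of_all _ fun γ hγ => ?_
    have hγ0 : (0:ℝ) < γ := hγ
    rw [Real.norm_eq_abs, Real.norm_eq_abs, abs_of_nonneg (hg_nonneg s hs γ hγ0),
      abs_of_nonneg (hfE_nonneg γ hγ0.le)]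
    calc g s γ ≤ 1 * fE γ := by
          refine mul_le_mul_of_nonneg_right ?_ (hfE_nonneg γ hγ0.le)
          exact arsCDF_le_one hmB hpB hKB1 hKB2 (by positivity) (by positivity)
            (harg0 γ hγ0.le)
      _ = fE γ := one_mul _
  -- positivity of Po
  have hPo_pos : ∀ s : ℝ, 0 < s → 0 < Po s := by
    intro s hs
    rw [hPo s]
    rw [setIntegral_pos_iff_support_of_nonneg_ae ?h1 (hg_int s hs)]
    case h1 =>
      filter_upwards [ae_restrict_mem measurableSet_Ioi] with γ hγ
      exact hg_nonneg s hs γ hγ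
    have hsub : Set.Ioi (0:ℝ) ⊆ Function.support (g s) ∩ Set.Ioi 0 :=
      fun γ hγ => ⟨ne_of_gt (hg_pos s hs γ hγ), hγ⟩
    calc (0:ENNReal) < volume (Set.Ioi (0:ℝ)) := by simp [Real.volume_Ioi]
      _ ≤ _ := measure_mono hsub
  refine ⟨hPo_pos, ?_⟩
  -- upper bound
  set J : ℝ := ∫ γ in Set.Ioi (0:ℝ), (Rs * γ + Rs - 1) * fE γ with hJdef
  have hJint : IntegrableOn (fun γ : ℝ => (Rs * γ + Rs - 1) * fE γ) (Set.Ioi 0) := by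
    refine IntegrableOn.congr_fun
      (((hfE_int 1).const_mul Rs).add ((hfE_int 0).const_mul (Rs - 1)))
      (fun γ _ => ?_) measurableSet_Ioi
    simp only [Pi.add_apply, pow_one, pow_zero, one_mul]
    ring
  have hupper : ∀ s : ℝ, 0 < s → Po s ≤ (J / cmin) / s := by
    intro s hs
    have hcs : (0:ℝ) < cmin * s := by positivity
    have hmono : Po s ≤ ∫ γ in Set.Ioi (0:ℝ), (1/(cmin*s)) * ((Rs * γ + Rs - 1) * fE γ) := by
      rw [hPo s]
      refine setIntegral_mono_on (hg_int s hs) (hJint.const_mul _) measurableSet_Ioi ?_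
      intro γ hγ
      have hγ0 : (0:ℝ) < γ := hγ
      have hFB : arsCDF pB mB KB1 KB2 (c1*s) (c2*s) (Rs*γ+Rs-1) ≤ (Rs*γ+Rs-1)/(cmin*s) := by
        refine arsCDF_le hmB hpB hKB1 hKB2 hcs ?_ ?_ (harg0 γ hγ0.le)
        · exact mul_le_mul_of_nonneg_right (min_le_left _ _) hs.le
        · exact mul_le_mul_of_nonneg_right (min_le_right _ _) hs.le
      calc g s γ ≤ ((Rs*γ+Rs-1)/(cmin*s)) * fE γ :=
            mul_le_mul_of_nonneg_right hFB (hfE_nonneg γ hγ0.le)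
        _ = (1/(cmin*s)) * ((Rs * γ + Rs - 1) * fE γ) := by ring
    rw [MeasureTheory.integral_const_mul] at hmono
    calc Po s ≤ (1/(cmin*s)) * J := hmono
      _ = (J / cmin) / s := by field_simp
  set bU : ℝ := max (J / cmin) 1 with hbUdef
  have hbU : 0 < bU := lt_of_lt_of_le one_pos (le_max_right _ _)
  have hupper' : ∀ s : ℝ, 0 < s → Po s ≤ bU / s := by
    intro s hs
    refine (hupper s hs).trans ?_
    gcongr
    exact le_max_left _ _
  -- lower bound
  set I1 : ℝ := ∫ γ in Set.Ioo (0:ℝ) 1, γ * fE γ with hI1def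
  have hI1int : IntegrableOn (fun γ : ℝ => γ * fE γ) (Set.Ioo (0:ℝ) 1) := by
    refine (((hfE_int 1).mono_set Set.Ioo_subset_Ioi_self).congr_fun
      (fun γ _ => by simp) measurableSet_Ioo)
  have hI1pos : 0 < I1 := by
    rw [hI1def, setIntegral_pos_iff_support_of_nonneg_ae ?h1 hI1int]
    case h1 =>
      filter_upwards [ae_restrict_mem measurableSet_Ioo] with γ hγ
      exact mul_nonneg (le_of_lt hγ.1) (hfE_nonneg γ hγ.1.le)
    have hsub : Set.Ioo (0:ℝ) 1 ⊆ Function.support (fun γ => γ * fE γ) ∩ Set.Ioo 0 1 :=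
      fun γ hγ => ⟨ne_of_gt (mul_pos hγ.1 (hfE_pos γ hγ.1)), hγ⟩
    calc (0:ENNReal) < volume (Set.Ioo (0:ℝ) 1) := by simp [Real.volume_Ioo]
      _ ≤ _ := measure_mono hsub
  set bmin : ℝ := min (Bcoef mB KB1 (mB-1)) (Bcoef mB KB2 (mB-1)) with hbmindef
  have hbmin : 0 < bmin := lt_min (Bcoef_last_pos hmB hKB1) (Bcoef_last_pos hmB hKB2)
  set Ec : ℝ := Real.exp (-((2*Rs-1)/cmin)) with hEcdef
  have hEc : 0 < Ec := Real.exp_pos _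
  set A : ℝ := bmin * Ec / cmax with hAdef
  have hA : 0 < A := by positivity
  set aL : ℝ := A * I1 with haLdef
  have haL : 0 < aL := mul_pos hA hI1pos
  have hlower : ∀ s : ℝ, 1 ≤ s → aL / s ≤ Po s := by
    intro s hs1
    have hs : 0 < s := lt_of_lt_of_le one_pos hs1
    have step1 : (∫ γ in Set.Ioo (0:ℝ) 1, g s γ) ≤ Po s := by
      rw [hPo s]
      refine setIntegral_mono_set (hg_int s hs) ?_ ?_
      · filter_upwards [ae_restrict_mem measurableSet_Ioi] with γ hγ
        exact hg_nonneg s hs γ hγ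
      · exact HasSubset.Subset.eventuallyLE Set.Ioo_subset_Ioi_self
    have step2 : (A/s) * I1 ≤ ∫ γ in Set.Ioo (0:ℝ) 1, g s γ := by
      rw [hI1def, ← MeasureTheory.integral_const_mul]
      refine setIntegral_mono_on (hI1int.const_mul _)
        ((hg_int s hs).mono_set Set.Ioo_subset_Ioi_self) measurableSet_Ioo ?_
      intro γ hγ
      obtain ⟨hγ0, hγ1⟩ := hγ
      set x : ℝ := Rs * γ + Rs - 1 with hxdef
      have hx0 : 0 < x := lt_of_lt_of_le hγ0 (harg γ hγ0.le)
      have hxU : x ≤ 2*Rs - 1 := by rw [hxdef]; nlinarith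
      have hFB : bmin * ((x/(cmax*s)) * Real.exp (-(x/(cmin*s))))
          ≤ arsCDF pB mB KB1 KB2 (c1*s) (c2*s) x := by
        refine arsCDF_ge hmB hpB hKB1 hKB2 (cl := cmin*s) (cu := cmax*s)
          (by positivity) ?_ ?_ ?_ ?_ hx0.le
        · exact mul_le_mul_of_nonneg_right (min_le_left _ _) hs.le
        · exact mul_le_mul_of_nonneg_right (min_le_right _ _) hs.le
        · exact mul_le_mul_of_nonneg_right (le_max_left _ _) hs.le
        · exact mul_le_mul_of_nonneg_right (le_max_right _ _) hs.le
      have hexp : Ec ≤ Real.exp (-(x/(cmin*s))) := by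
        rw [hEcdef]
        refine Real.exp_le_exp.mpr (neg_le_neg ?_)
        have h1 : x/(cmin*s) ≤ x/cmin :=
          div_le_div_of_nonneg_left hx0.le hcmin (le_mul_of_one_le_right hcmin.le hs1)
        have h2 : x/cmin ≤ (2*Rs-1)/cmin := by gcongr
        linarith
      have hFB2 : (A/s) * γ ≤ arsCDF pB mB KB1 KB2 (c1*s) (c2*s) x := by
        refine le_trans ?_ hFB
        have heq : (A/s) * γ = bmin * ((γ/(cmax*s)) * Ec) := by rw [hAdef]; ring
        rw [heq]
        refine mul_le_mul_of_nonneg_left ?_ hbmin.le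
        refine mul_le_mul ?_ hexp hEc.le (by positivity)
        gcongr
        exact harg γ hγ0.le
      show (A/s) * (γ * fE γ) ≤ g s γ
      rw [hgdef]
      calc (A/s) * (γ * fE γ) = ((A/s) * γ) * fE γ := by ring
        _ ≤ arsCDF pB mB KB1 KB2 (c1*s) (c2*s) (Rs * γ + Rs - 1) * fE γ :=
            mul_le_mul_of_nonneg_right hFB2 (hfE_nonneg γ hγ0.le)
    calc aL / s = (A/s) * I1 := by rw [haLdef]; ring
      _ ≤ ∫ γ in Set.Ioo (0:ℝ) 1, g s γ := step2
      _ ≤ Po s := step1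
  -- limit
  have hloginv : Tendsto (fun s : ℝ => (Real.log s)⁻¹) atTop (nhds 0) := by
    have := Real.tendsto_log_atTop.inv_tendsto_atTop
    exact this.congr fun s => rfl
  have hlimc : ∀ c : ℝ, Tendsto (fun s : ℝ => 1 - Real.log c / Real.log s) atTop (nhds 1) := by
    intro c
    have h : Tendsto (fun s : ℝ => 1 - Real.log c * (Real.log s)⁻¹) atTop
        (nhds (1 - Real.log c * 0)) :=
      (tendsto_const_nhds (x := (1:ℝ))).sub (hloginv.const_mul (Real.log c))
    simp only [mul_zero, sub_zero] at h
    refine h.congr fun s => ?_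
    rw [div_eq_mul_inv]
  refine tendsto_of_tendsto_of_tendsto_of_le_of_le' (hlimc bU) (hlimc aL) ?_ ?_
  · filter_upwards [eventually_ge_atTop (2:ℝ)] with s hs2
    have hs1 : (1:ℝ) ≤ s := by linarith
    have hs0 : (0:ℝ) < s := by linarith
    have hlogs : 0 < Real.log s := Real.log_pos (by linarith)
    have hp := hPo_pos s hs0
    have hlog1 : Real.log (Po s) ≤ Real.log bU - Real.log s := by
      calc Real.log (Po s) ≤ Real.log (bU/s) := Real.log_le_log hp (hupper' s hs0)
        _ = Real.log bU - Real.log s := Real.log_div (ne_of_gt hbU) (ne_of_gt hs0)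
    have heq : 1 - Real.log bU / Real.log s = (Real.log s - Real.log bU) / Real.log s := by
      field_simp
    rw [heq]
    exact (div_le_div_iff_of_pos_right hlogs).mpr (by linarith)
  · filter_upwards [eventually_ge_atTop (2:ℝ)] with s hs2
    have hs1 : (1:ℝ) ≤ s := by linarith
    have hs0 : (0:ℝ) < s := by linarith
    have hlogs : 0 < Real.log s := Real.log_pos (by linarith)
    have hlog2 : Real.log aL - Real.log s ≤ Real.log (Po s) := by
      calc Real.log aL - Real.log s = Real.log (aL/s) :=
            (Real.log_div (ne_of_gt haL) (ne_of_gt hs0)).symm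
        _ ≤ Real.log (Po s) := Real.log_le_log (by positivity) (hlower s hs1)
    have heq : 1 - Real.log aL / Real.log s = (Real.log s - Real.log aL) / Real.log s := by
      field_simp
    rw [heq]
    exact (div_le_div_iff_of_pos_right hlogs).mpr (by linarith)
end
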